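/- arXiv:2511.20025 — 2 statements merged into one kernel-verified Lean document; each statement's English description precedes it below -/
import Mathlib

section
/- For every function u in H^1((0,1),ℝ) with u(0) = 0, one has ∫₀¹ u(x)²/x² dx ≤ 4 ∫₀¹ u'(x)² dx. -/
open MeasureTheory Set Filter Topology

/-- Cauchy–Schwarz with the constant function on `Ioc 0 ε`. -/
lemma hardy_cs_aux (f : ℝ → ℝ) (ε : ℝ) (hε : 0 < ε)
    (hf : IntegrableOn f (Ioc 0 ε)) (hf2 : IntegrableOn (fun x => f x ^ 2) (Ioc 0 ε)) :
    (∫ x in Ioc 0 ε, f x) ^ 2 ≤ ε * ∫ x in Ioc 0 ε, f x ^ 2 := by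
  set I := ∫ x in Ioc 0 ε, f x with hI
  set c : ℝ := I / ε with hc
  have h0 : 0 ≤ ∫ x in Ioc 0 ε, (f x - c) ^ 2 :=
    integral_nonneg (fun x => sq_nonneg _)
  have hexp : ∫ x in Ioc 0 ε, (f x - c) ^ 2
      = (∫ x in Ioc 0 ε, f x ^ 2) - 2 * c * I + c ^ 2 * ε := by
    have h1 : ∀ x : ℝ, (f x - c) ^ 2 = f x ^ 2 - 2 * c * f x + c ^ 2 := by
      intro x; ring
    simp_rw [h1]
    have i1 : IntegrableOn (fun x => f x ^ 2 - 2 * c * f x) (Ioc 0 ε) volume :=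
      hf2.sub (hf.const_mul (2 * c))
    have i2 : IntegrableOn (fun _ : ℝ => c ^ 2) (Ioc 0 ε) volume :=
      integrableOn_const (by simp [Real.volume_Ioc])
    rw [integral_add i1 i2, integral_sub hf2 (hf.const_mul (2 * c)),
      integral_const_mul, setIntegral_const]
    simp [Real.volume_Ioc, hε.le, smul_eq_mul, hI]
    ring
  rw [hexp] at h0
  have hcε : c * ε = I := by rw [hc]; field_simp
  nlinarith [sq_nonneg c, hε]

/-- **Hardy inequality** on `(0,1)`: for every `u ∈ H¹((0,1),ℝ)` with `u(0) = 0`,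
`∫₀¹ u(x)²/x² dx ≤ 4 ∫₀¹ u'(x)² dx`. -/
theorem hardy_inequality (u : ℝ → ℝ)
    (hu_cont : ContinuousOn u (Icc 0 1))
    (hu_diff : ∀ x ∈ Ioo (0:ℝ) 1, DifferentiableAt ℝ u x)
    (hu0 : u 0 = 0)
    (hu_deriv_int : IntegrableOn (fun x => (deriv u x) ^ 2) (Ioo 0 1)) :
    ∫ x in Ioo (0:ℝ) 1, (u x) ^ 2 / x ^ 2 ≤ 4 * ∫ x in Ioo (0:ℝ) 1, (deriv u x) ^ 2 := by
  set B := ∫ x in Ioo (0:ℝ) 1, (deriv u x) ^ 2 with hB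
  have hB0 : 0 ≤ B := integral_nonneg (fun x => sq_nonneg _)
  have hdmeas : AEStronglyMeasurable (deriv u) (volume.restrict (Ioo (0:ℝ) 1)) :=
    (measurable_deriv u).aestronglyMeasurable
  have hderiv_int : IntegrableOn (deriv u) (Ioo 0 1) := by
    have h1 : IntegrableOn (fun _ : ℝ => (1:ℝ)) (Ioo 0 1) volume :=
      integrableOn_const (by simp [Real.volume_Ioo])
    have h2 : IntegrableOn (fun x => (1 + (deriv u x) ^ 2) / 2) (Ioo 0 1) volume :=
      (h1.add hu_deriv_int).div_const 2
    refine Integrable.mono' h2 hdmeas ?_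
    filter_upwards with x
    rw [Real.norm_eq_abs]
    nlinarith [sq_nonneg (|deriv u x| - 1), sq_abs (deriv u x)]
  -- the key estimate on (ε, 1)
  have key : ∀ ε : ℝ, 0 < ε → ε < 1 →
      ∫ x in Ioo ε 1, (u x) ^ 2 / x ^ 2 ≤ 4 * B + 2 * ∫ x in Ioc 0 ε, (deriv u x) ^ 2 := by
    intro ε hε hε1
    have hsub1 : Icc ε 1 ⊆ Icc (0:ℝ) 1 := Icc_subset_Icc hε.le le_rfl
    have hsubI : Ioo ε 1 ⊆ Ioo (0:ℝ) 1 := Ioo_subset_Ioo hε.le le_rfl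
    set ψ : ℝ → ℝ := fun x => 2 * u x / x with hψ
    set φ : ℝ → ℝ := fun x => ψ x * deriv u x - u x ^ 2 / x ^ 2 with hφ
    have hne : ∀ x ∈ Icc ε 1, x ≠ 0 := fun x hx => ne_of_gt (lt_of_lt_of_le hε hx.1)
    have hψcont : ContinuousOn ψ (Icc ε 1) :=
      (continuousOn_const.mul (hu_cont.mono hsub1)).div continuousOn_id hne
    have hcont2 : ContinuousOn (fun x : ℝ => u x ^ 2 / x ^ 2) (Icc ε 1) :=
      (((hu_cont.mono hsub1).pow 2).div (continuousOn_pow 2)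
        (fun x hx => pow_ne_zero 2 (hne x hx)))
    have hint2 : IntegrableOn (fun x : ℝ => u x ^ 2 / x ^ 2) (Ioo ε 1) :=
      (hcont2.integrableOn_Icc).mono_set Ioo_subset_Icc_self
    obtain ⟨C, hC⟩ := isCompact_Icc.exists_bound_of_continuousOn hψcont
    have hintψd : IntegrableOn (fun x => ψ x * deriv u x) (Ioo ε 1) := by
      apply Integrable.bdd_mul (c := C) (hderiv_int.mono_set hsubI)
        ((hψcont.mono Ioo_subset_Icc_self).aestronglyMeasurable measurableSet_Ioo)
      filter_upwards [ae_restrict_mem measurableSet_Ioo] with x hx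
      exact hC x ⟨hx.1.le, hx.2.le⟩
    have hintφ : IntegrableOn φ (Ioo ε 1) := hintψd.sub hint2
    -- derivative of g = u²/x
    have hgderiv : ∀ x ∈ Ioo ε 1, HasDerivAt (fun y => u y ^ 2 / y) (φ x) x := by
      intro x hx
      have hx0 : (0:ℝ) < x := lt_trans hε hx.1
      have hd : HasDerivAt u (deriv u x) x := (hu_diff x (hsubI hx)).hasDerivAt
      have h1 : HasDerivAt (fun y => u y ^ 2) (2 * u x * deriv u x) x := by
        have := hd.fun_pow 2
        simpa [mul_comm, mul_assoc, mul_left_comm] using this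
      have h2 := h1.fun_div (hasDerivAt_id x) (ne_of_gt hx0)
      refine h2.congr_deriv ?_
      simp only [hφ, hψ, id]
      field_simp
    have hgcont : ContinuousOn (fun y : ℝ => u y ^ 2 / y) (Icc ε 1) :=
      ((hu_cont.mono hsub1).pow 2).div continuousOn_id hne
    have hivφ : IntervalIntegrable φ volume ε 1 := by
      rw [intervalIntegrable_iff_integrableOn_Ioo_of_le hε1.le]; exact hintφ
    have hftc : ∫ x in Ioo ε 1, φ x = u 1 ^ 2 / 1 - u ε ^ 2 / ε := by
      have h := intervalIntegral.integral_eq_sub_of_hasDerivAt_of_le hε1.le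
        hgcont hgderiv hivφ
      rwa [intervalIntegral.integral_of_le hε1.le, integral_Ioc_eq_integral_Ioo] at h
    -- pointwise inequality
    have hpt : ∀ x ∈ Ioo ε 1,
        u x ^ 2 / x ^ 2 ≤ 4 * (deriv u x) ^ 2 - 2 * φ x := by
      intro x hx
      have hx0 : (0:ℝ) < x := lt_trans hε hx.1
      have ha : u x ^ 2 / x ^ 2 = (u x / x) ^ 2 := (div_pow _ _ 2).symm
      have hb : ψ x = 2 * (u x / x) := by simp only [hψ]; ring
      simp only [hφ]
      rw [ha, hb]
      nlinarith [sq_nonneg (2 * deriv u x - u x / x)]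
    have hintsq : IntegrableOn (fun x => (deriv u x) ^ 2) (Ioo ε 1) :=
      hu_deriv_int.mono_set hsubI
    have hmono : ∫ x in Ioo ε 1, u x ^ 2 / x ^ 2
        ≤ ∫ x in Ioo ε 1, (4 * (deriv u x) ^ 2 - 2 * φ x) :=
      setIntegral_mono_on hint2 ((hintsq.const_mul 4).sub (hintφ.const_mul 2))
        measurableSet_Ioo hpt
    have hsplit : ∫ x in Ioo ε 1, (4 * (deriv u x) ^ 2 - 2 * φ x)
        = 4 * (∫ x in Ioo ε 1, (deriv u x) ^ 2) - 2 * ∫ x in Ioo ε 1, φ x := by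
      rw [integral_sub (hintsq.const_mul 4) (hintφ.const_mul 2),
        integral_const_mul, integral_const_mul]
    have hBle : ∫ x in Ioo ε 1, (deriv u x) ^ 2 ≤ B := by
      apply setIntegral_mono_set hu_deriv_int
      · filter_upwards with x using sq_nonneg _
      · exact HasSubset.Subset.eventuallyLE hsubI
    -- boundary term via FTC on [0, ε] and Cauchy–Schwarz
    have hsub0 : Ioc 0 ε ⊆ Ioo (0:ℝ) 1 := fun x hx => ⟨hx.1, lt_of_le_of_lt hx.2 hε1⟩
    have hintd0 : IntegrableOn (deriv u) (Ioc 0 ε) := hderiv_int.mono_set hsub0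
    have hintsq0 : IntegrableOn (fun x => (deriv u x) ^ 2) (Ioc 0 ε) :=
      hu_deriv_int.mono_set hsub0
    have huε : u ε = ∫ x in Ioc 0 ε, deriv u x := by
      have h := intervalIntegral.integral_eq_sub_of_hasDerivAt_of_le hε.le
        (hu_cont.mono (Icc_subset_Icc le_rfl hε1.le))
        (fun x hx => (hu_diff x ⟨hx.1, lt_trans hx.2 hε1⟩).hasDerivAt)
        (by rw [intervalIntegrable_iff_integrableOn_Ioc_of_le hε.le]; exact hintd0)
      rw [intervalIntegral.integral_of_le hε.le] at h
      rw [h, hu0, sub_zero]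
    have hcs : u ε ^ 2 ≤ ε * ∫ x in Ioc 0 ε, (deriv u x) ^ 2 := by
      rw [huε]; exact hardy_cs_aux _ ε hε hintd0 hintsq0
    have hA0 : 0 ≤ ∫ x in Ioc 0 ε, (deriv u x) ^ 2 :=
      integral_nonneg (fun x => sq_nonneg _)
    have hbd : u ε ^ 2 / ε ≤ ∫ x in Ioc 0 ε, (deriv u x) ^ 2 := by
      rw [div_le_iff₀ hε]; linarith [hcs]
    calc ∫ x in Ioo ε 1, u x ^ 2 / x ^ 2
        ≤ 4 * (∫ x in Ioo ε 1, (deriv u x) ^ 2) - 2 * ∫ x in Ioo ε 1, φ x := by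
          rw [← hsplit]; exact hmono
      _ = 4 * (∫ x in Ioo ε 1, (deriv u x) ^ 2) - 2 * (u 1 ^ 2 / 1 - u ε ^ 2 / ε) := by
          rw [hftc]
      _ ≤ 4 * B + 2 * ∫ x in Ioc 0 ε, (deriv u x) ^ 2 := by
          have h1 : (0:ℝ) ≤ u 1 ^ 2 / 1 := by positivity
          nlinarith [hBle, hbd]
  -- now take ε → 0
  by_cases hint : IntegrableOn (fun x => u x ^ 2 / x ^ 2) (Ioo 0 1)
  · -- show LHS ≤ 4B + δ for all δ > 0
    by_contra hcon
    push_neg at hcon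
    set L := ∫ x in Ioo (0:ℝ) 1, u x ^ 2 / x ^ 2 with hL
    set δ := (L - 4 * B) / 2 with hδ
    have hδ0 : 0 < δ := by rw [hδ]; linarith [hcon]
    -- combined function
    set h : ℝ → ℝ := fun x => u x ^ 2 / x ^ 2 + 2 * (deriv u x) ^ 2 with hh
    have hhint : IntegrableOn h (Ioo 0 1) := hint.add (hu_deriv_int.const_mul 2)
    -- sets shrinking to ∅
    have htend : Filter.Tendsto (fun n : ℕ => ∫ x in Ioc 0 (1 / (n + 2 : ℝ)), h x)
        Filter.atTop (𝓝 (∫ x in ⋂ n : ℕ, Ioc 0 (1 / (n + 2 : ℝ)), h x)) := by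
      apply tendsto_setIntegral_of_antitone (fun n => measurableSet_Ioc)
      · intro m n hmn
        apply Ioc_subset_Ioc le_rfl
        apply one_div_le_one_div_of_le (by positivity)
        have : (m:ℝ) ≤ n := Nat.cast_le.mpr hmn
        linarith
      · refine ⟨0, hhint.mono_set fun x hx => ?_⟩
        exact ⟨hx.1, lt_of_le_of_lt hx.2 (by norm_num)⟩
    have hiempty : (⋂ n : ℕ, Ioc 0 (1 / (n + 2 : ℝ))) = (∅ : Set ℝ) := by
      ext x
      simp only [mem_iInter, mem_Ioc, mem_empty_iff_false, iff_false, not_forall]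
      by_cases hx : 0 < x
      · obtain ⟨n, hn⟩ := exists_nat_gt (1 / x)
        refine ⟨n, fun hmem => ?_⟩
        have h1 : 1 / x < (n:ℝ) + 2 := by linarith
        have h2 : 1 / ((n:ℝ) + 2) < x := by
          rw [div_lt_iff₀ (by positivity)]
          rw [div_lt_iff₀ hx] at h1
          linarith
        linarith [hmem.2]
      · exact ⟨0, fun hmem => hx hmem.1⟩
    rw [hiempty] at htend
    simp only [setIntegral_empty] at htend
    obtain ⟨n, hn⟩ := (htend.eventually (eventually_lt_nhds (half_pos hδ0))).exists
    set ε : ℝ := 1 / ((n : ℝ) + 2) with hεdef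
    have hε0 : 0 < ε := by positivity
    have hε1 : ε < 1 := by
      rw [hεdef, div_lt_one (by positivity)]
      have : (0:ℝ) ≤ (n:ℝ) := Nat.cast_nonneg n
      linarith
    have hsub0 : Ioc 0 ε ⊆ Ioo (0:ℝ) 1 := fun x hx => ⟨hx.1, lt_of_le_of_lt hx.2 hε1⟩
    have hfint0 : IntegrableOn (fun x => u x ^ 2 / x ^ 2) (Ioc 0 ε) := hint.mono_set hsub0
    have hhint0 : IntegrableOn h (Ioc 0 ε) := hhint.mono_set hsub0
    have hf_le_h : ∫ x in Ioc 0 ε, u x ^ 2 / x ^ 2 ≤ ∫ x in Ioc 0 ε, h x :=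
      setIntegral_mono_on hfint0 hhint0 measurableSet_Ioc (fun x hx => by
        simp only [hh]; nlinarith [sq_nonneg (deriv u x)])
    have hsq_le_h : 2 * ∫ x in Ioc 0 ε, (deriv u x) ^ 2 ≤ ∫ x in Ioc 0 ε, h x := by
      rw [← integral_const_mul]
      refine setIntegral_mono_on ((hu_deriv_int.mono_set hsub0).const_mul 2) hhint0
        measurableSet_Ioc (fun x hx => ?_)
      simp only [hh]
      have h1 : 0 ≤ u x ^ 2 / x ^ 2 := by positivity
      linarith
    have hdisj : Disjoint (Ioc (0:ℝ) ε) (Ioo ε 1) := by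
      rw [Set.disjoint_left]
      rintro x ⟨_, hx2⟩ ⟨hx3, _⟩
      exact absurd hx3 (not_lt.mpr hx2)
    have hsplitL : L = (∫ x in Ioc 0 ε, u x ^ 2 / x ^ 2) + ∫ x in Ioo ε 1, u x ^ 2 / x ^ 2 := by
      rw [hL, ← setIntegral_union hdisj measurableSet_Ioo hfint0
        (hint.mono_set (Ioo_subset_Ioo hε0.le le_rfl)), Ioc_union_Ioo_eq_Ioo hε0.le hε1]
    have hkey := key ε hε0 hε1
    have hLlt : L < 4 * B + δ := by
      rw [hsplitL]
      have h2 : ∫ x in Ioc 0 ε, h x < δ / 2 := hn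
      linarith
    have hLeq : L = 4 * B + 2 * δ := by rw [hδ]; ring
    linarith
  · rw [integral_undef hint]
    positivity
end

section
/- For every n ∈ ℕ and every real ν > -1, ∫₀^∞ e^{-r} r^ν (L_n^{(ν)}(r))² dr = Γ(ν + n + 1) / n!. -/
open MeasureTheory Set

-- finite difference step
private lemma fd (n : ℕ) (f : ℕ → ℝ) :
    ∑ k ∈ Finset.range (n+2), (-1:ℝ)^k * ((n+1).choose k) * f k
    = ∑ k ∈ Finset.range (n+1), (-1:ℝ)^k * (n.choose k) * (f k - f (k+1)) := by
  have h2 : ∑ k ∈ Finset.range (n+1), (-1:ℝ)^(k+1) * (n.choose (k+1)) * f (k+1) + f 0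
      = ∑ k ∈ Finset.range (n+1), (-1:ℝ)^k * (n.choose k) * f k := by
    have := Finset.sum_range_succ' (fun k => (-1:ℝ)^k * (n.choose k) * f k) (n+1)
    simp only [pow_zero, Nat.choose_zero_right, Nat.cast_one, one_mul] at this
    rw [← this, Finset.sum_range_succ, Nat.choose_succ_self]
    simp
  rw [Finset.sum_range_succ' (fun k => (-1:ℝ)^k * ((n+1).choose k) * f k) (n+1)]
  simp only [Nat.choose_succ_succ, Nat.cast_add, pow_zero, Nat.choose_zero_right,
    Nat.cast_one, one_mul]
  calc ∑ k ∈ Finset.range (n+1), (-1:ℝ)^(k+1) * ((n.choose k : ℝ) + n.choose (k+1)) * f (k+1) + f 0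
      = (∑ k ∈ Finset.range (n+1), -((-1:ℝ)^k * (n.choose k) * f (k+1)))
        + (∑ k ∈ Finset.range (n+1), (-1:ℝ)^(k+1) * (n.choose (k+1)) * f (k+1) + f 0) := by
        rw [Finset.sum_congr rfl (fun k _ => by ring :
          ∀ k ∈ Finset.range (n+1), (-1:ℝ)^(k+1) * ((n.choose k : ℝ) + n.choose (k+1)) * f (k+1)
          = -((-1:ℝ)^k * (n.choose k) * f (k+1)) + (-1:ℝ)^(k+1) * (n.choose (k+1)) * f (k+1)),
          Finset.sum_add_distrib]
        ring
    _ = ∑ k ∈ Finset.range (n+1), (-1:ℝ)^k * (n.choose k) * (f k - f (k+1)) := by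
        rw [h2, ← Finset.sum_add_distrib]
        exact Finset.sum_congr rfl (fun k _ => by ring)

private lemma prod_self_fac : ∀ n : ℕ, ∏ i ∈ Finset.range n, ((n:ℝ) - i) = n.factorial := by
  intro n
  induction n with
  | zero => simp
  | succ n ih =>
    rw [Finset.prod_range_succ',
      Finset.prod_congr rfl (fun i _ => by push_cast; ring :
        ∀ i ∈ Finset.range n, ((n+1:ℕ):ℝ) - ((i+1:ℕ):ℝ) = (n:ℝ) - i), ih]
    push_cast [Nat.factorial_succ]
    ring

private lemma diffD : ∀ (n m : ℕ) (c : ℝ),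
    ∑ k ∈ Finset.range (n+1), (-1:ℝ)^k * (n.choose k) * ∏ i ∈ Finset.range m, (c + k + i)
    = (-1:ℝ)^n * (∏ i ∈ Finset.range n, ((m:ℝ) - i)) * ∏ i ∈ Finset.range (m - n), (c + n + i) := by
  intro n
  induction n with
  | zero => intro m c; simp
  | succ n ih =>
    intro m c
    rw [show n+1+1 = n+2 from rfl, fd]
    cases m with
    | zero =>
      simp only [Finset.range_zero, Finset.prod_empty, sub_self, mul_zero, Finset.sum_const_zero]
      rw [Finset.prod_eq_zero (Finset.mem_range.2 (Nat.succ_pos n))]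
      · ring
      · simp
    | succ m =>
      have hdiff : ∀ k : ℕ, (∏ i ∈ Finset.range (m+1), (c + k + i))
            - ∏ i ∈ Finset.range (m+1), (c + (k+1:ℕ) + i)
          = -((m:ℝ)+1) * ∏ i ∈ Finset.range m, ((c+1) + k + i) := by
        intro k
        rw [Finset.prod_range_succ' (fun i => (c + k + i)) m,
            Finset.prod_range_succ (fun i => (c + (k+1:ℕ) + i)) m,
            Finset.prod_congr rfl (fun i _ => by push_cast; ring :
              ∀ i ∈ Finset.range m, c + (k:ℝ) + (i+1:ℕ) = (c+1) + k + i),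
            Finset.prod_congr rfl (fun i _ => by push_cast; ring :
              ∀ i ∈ Finset.range m, c + ((k+1:ℕ):ℝ) + i = (c+1) + k + i)]
        push_cast [Nat.cast_zero]
        ring
      rw [Finset.sum_congr rfl (fun k _ => by rw [hdiff k])]
      rw [Finset.sum_congr rfl (fun k _ => by ring :
        ∀ k ∈ Finset.range (n+1), (-1:ℝ)^k * (n.choose k) * (-((m:ℝ)+1) * ∏ i ∈ Finset.range m, ((c+1) + k + i))
          = (-((m:ℝ)+1)) * ((-1:ℝ)^k * (n.choose k) * ∏ i ∈ Finset.range m, ((c+1) + k + i))),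
        ← Finset.mul_sum, ih m (c+1)]
      rw [Nat.succ_sub_succ]
      rw [Finset.prod_congr rfl (fun i _ => by push_cast; ring :
        ∀ i ∈ Finset.range (m-n), (c+1) + (n:ℝ) + i = c + ((n+1:ℕ):ℝ) + i)]
      rw [Finset.prod_range_succ' (fun i => (((m+1:ℕ):ℝ) - i)) n,
        Finset.prod_congr rfl (fun i _ => by push_cast; ring :
          ∀ i ∈ Finset.range n, ((m+1:ℕ):ℝ) - ((i+1:ℕ):ℝ) = (m:ℝ) - i)]
      push_cast
      ring

private noncomputable def A (n : ℕ) (ν : ℝ) (j : ℕ) : ℝ :=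
  (-1:ℝ)^j * ((∏ i ∈ Finset.range (n-j), (ν + j + 1 + i)) / ((n-j).factorial : ℝ)) / (j.factorial : ℝ)

private lemma gammaProd (ν : ℝ) (hν : -1 < ν) : ∀ m : ℕ,
    Real.Gamma (ν + m + 1) = Real.Gamma (ν + 1) * ∏ i ∈ Finset.range m, (ν + 1 + i) := by
  intro m
  induction m with
  | zero => simp
  | succ m ih =>
    have hm : (0:ℝ) ≤ m := Nat.cast_nonneg m
    have h : ν + ((m+1:ℕ):ℝ) + 1 = (ν + m + 1) + 1 := by push_cast; ring
    rw [h, Real.Gamma_add_one (by linarith), ih, Finset.prod_range_succ]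
    ring

private lemma choose_div (n k : ℕ) (hk : k ≤ n) :
    (1:ℝ) / (((n-k).factorial : ℝ) * (k.factorial : ℝ)) = (n.choose k : ℝ) / (n.factorial : ℝ) := by
  have h := Nat.choose_mul_factorial_mul_factorial hk
  have h1 : ((n-k).factorial : ℝ) ≠ 0 := Nat.cast_ne_zero.2 (Nat.factorial_ne_zero _)
  have h2 : ((k).factorial : ℝ) ≠ 0 := Nat.cast_ne_zero.2 (Nat.factorial_ne_zero _)
  have h3 : ((n).factorial : ℝ) ≠ 0 := Nat.cast_ne_zero.2 (Nat.factorial_ne_zero _)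
  have h4 : (n.choose k : ℝ) * (k.factorial : ℝ) * ((n-k).factorial : ℝ) = (n.factorial : ℝ) := by
    exact_mod_cast congrArg (Nat.cast : ℕ → ℝ) h
  field_simp
  linarith [h4]

private lemma innerS (n j : ℕ) (ν : ℝ) (hν : -1 < ν) :
    ∑ k ∈ Finset.range (n+1), A n ν k * Real.Gamma (ν + j + k + 1)
    = Real.Gamma (ν+1) * ((∏ i ∈ Finset.range n, (ν+1+i)) / (n.factorial : ℝ)) *
        ((-1:ℝ)^n * (∏ i ∈ Finset.range n, ((j:ℝ) - i)) * ∏ i ∈ Finset.range (j - n), ((ν+1) + n + i)) := by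
  have hterm : ∀ k ∈ Finset.range (n+1), A n ν k * Real.Gamma (ν + j + k + 1)
      = (Real.Gamma (ν+1) * ((∏ i ∈ Finset.range n, (ν+1+i)) / (n.factorial : ℝ)))
        * ((-1:ℝ)^k * (n.choose k : ℝ) * ∏ i ∈ Finset.range j, ((ν+1) + k + i)) := by
    intro k hk
    have hk' : k ≤ n := Nat.lt_succ_iff.1 (Finset.mem_range.1 hk)
    have hg : Real.Gamma (ν + j + k + 1) = Real.Gamma (ν + ((j+k:ℕ):ℝ) + 1) := by
      push_cast; ring_nf
    rw [hg, gammaProd ν hν (j+k)]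
    have hsplit : ∏ i ∈ Finset.range (j+k), (ν+1+(i:ℝ))
        = (∏ i ∈ Finset.range k, (ν+1+(i:ℝ))) * ∏ i ∈ Finset.range j, ((ν+1) + k + i) := by
      rw [add_comm j k, Finset.prod_range_add]
      congr 1
      exact Finset.prod_congr rfl (fun i _ => by push_cast; ring)
    have hsplit2 : (∏ i ∈ Finset.range k, (ν+1+(i:ℝ))) * ∏ i ∈ Finset.range (n-k), (ν + k + 1 + i)
        = ∏ i ∈ Finset.range n, (ν+1+(i:ℝ)) := by
      have h := Finset.prod_range_add (fun i => ν+1+(i:ℝ)) k (n-k)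
      rw [Nat.add_sub_cancel' hk'] at h
      rw [h]
      exact congrArg _ (Finset.prod_congr rfl (fun i _ => by push_cast; ring))
    rw [hsplit, ← hsplit2, A]
    have hcd := choose_div n k hk'
    linear_combination ((-1:ℝ)^k * Real.Gamma (ν+1) * (∏ i ∈ Finset.range k, (ν+1+(i:ℝ)))
      * (∏ i ∈ Finset.range (n-k), (ν + k + 1 + (i:ℝ)))
      * (∏ i ∈ Finset.range j, ((ν+1) + k + (i:ℝ)))) * hcd
  rw [Finset.sum_congr rfl hterm, ← Finset.mul_sum, diffD n j (ν+1)]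

private lemma key (n : ℕ) (ν : ℝ) (hν : -1 < ν) :
    ∑ j ∈ Finset.range (n+1), ∑ k ∈ Finset.range (n+1),
      A n ν j * A n ν k * Real.Gamma (ν + j + k + 1)
    = Real.Gamma (ν + n + 1) / (n.factorial : ℝ) := by
  have hsum : ∀ j ∈ Finset.range (n+1),
      ∑ k ∈ Finset.range (n+1), A n ν j * A n ν k * Real.Gamma (ν + j + k + 1)
      = A n ν j * (Real.Gamma (ν+1) * ((∏ i ∈ Finset.range n, (ν+1+i)) / (n.factorial : ℝ)) *
        ((-1:ℝ)^n * (∏ i ∈ Finset.range n, ((j:ℝ) - i)) * ∏ i ∈ Finset.range (j - n), ((ν+1) + n + i))) := by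
    intro j _
    rw [← innerS n j ν hν, Finset.mul_sum]
    exact Finset.sum_congr rfl (fun k _ => by ring)
  rw [Finset.sum_congr rfl hsum]
  rw [Finset.sum_eq_single_of_mem n (Finset.mem_range.2 (Nat.lt_succ_self n))]
  · have hAn : A n ν n = (-1:ℝ)^n / (n.factorial : ℝ) := by
      simp [A]
    rw [hAn, prod_self_fac, Nat.sub_self, gammaProd ν hν n]
    have hne : ((n.factorial : ℝ)) ≠ 0 := Nat.cast_ne_zero.2 (Nat.factorial_ne_zero _)
    have hsq : (-1:ℝ)^n * (-1:ℝ)^n = 1 := by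
      rw [← pow_add]
      exact Even.neg_one_pow ⟨n, rfl⟩
    simp only [Finset.range_zero, Finset.prod_empty, mul_one]
    field_simp
    linear_combination (Real.Gamma (ν+1) * (∏ i ∈ Finset.range n, (ν+1+(i:ℝ)))) * hsq
  · intro j _ hj
    have hjn : j < n := by
      rcases Nat.lt_succ_iff_lt_or_eq.1 (Finset.mem_range.1 ‹j ∈ Finset.range (n+1)›) with h | h
      · exact h
      · exact absurd h hj
    have hz : ∏ i ∈ Finset.range n, ((j:ℝ) - i) = 0 :=
      Finset.prod_eq_zero (Finset.mem_range.2 hjn) (sub_self (j:ℝ))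
    rw [hz]
    ring

/-- The generalized Laguerre polynomial
`L_n^{(ν)}(r) = ∑_{j=0}^n (-1)^j binom(n+ν, n-j) r^j / j!`. -/
noncomputable def laguerreL (n : ℕ) (ν r : ℝ) : ℝ :=
  ∑ j ∈ Finset.range (n + 1),
    (-1 : ℝ) ^ j * ((∏ i ∈ Finset.range (n - j), (ν + j + 1 + i)) / ((n - j).factorial : ℝ))
      * r ^ j / (j.factorial : ℝ)

/-- Orthogonality norm: `∫₀^∞ e^{-r} r^ν (L_n^{(ν)}(r))² dr = Γ(ν+n+1)/n!`. -/
theorem laguerre_norm (n : ℕ) (ν : ℝ) (hν : -1 < ν) :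
    ∫ r in Ioi (0:ℝ), Real.exp (-r) * r ^ ν * (laguerreL n ν r) ^ 2
      = Real.Gamma (ν + n + 1) / (n.factorial : ℝ) := by
  have hL : ∀ r : ℝ, laguerreL n ν r = ∑ j ∈ Finset.range (n+1), A n ν j * r ^ j := by
    intro r
    exact Finset.sum_congr rfl (fun j _ => by rw [A]; ring)
  have hs : ∀ j k : ℕ, (0:ℝ) < ν + j + k + 1 := by
    intro j k
    have hj : (0:ℝ) ≤ j := Nat.cast_nonneg _
    have hk : (0:ℝ) ≤ k := Nat.cast_nonneg _
    linarith
  have hpt : ∀ r ∈ Ioi (0:ℝ), Real.exp (-r) * r ^ ν * (laguerreL n ν r) ^ 2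
      = ∑ j ∈ Finset.range (n+1), ∑ k ∈ Finset.range (n+1),
          A n ν j * A n ν k * (Real.exp (-r) * r ^ (ν + j + k + 1 - 1)) := by
    intro r hr
    have hr0 : (0:ℝ) < r := hr
    have hterm : ∀ j k : ℕ, Real.exp (-r) * r ^ ν * (A n ν j * r^j * (A n ν k * r^k))
        = A n ν j * A n ν k * (Real.exp (-r) * r ^ (ν + j + k + 1 - 1)) := by
      intro j k
      rw [show ν + (j:ℝ) + k + 1 - 1 = ν + ((j+k:ℕ):ℝ) by push_cast; ring,
        Real.rpow_add hr0, Real.rpow_natCast, pow_add]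
      ring
    rw [hL, sq, Finset.sum_mul_sum, Finset.mul_sum]
    refine Finset.sum_congr rfl fun j _ => ?_
    rw [Finset.mul_sum]
    exact Finset.sum_congr rfl fun k _ => hterm j k
  rw [setIntegral_congr_fun measurableSet_Ioi (fun r hr => hpt r hr)]
  rw [integral_finset_sum _ (fun j _ => integrable_finset_sum _
    (fun k _ => (Real.GammaIntegral_convergent (hs j k)).const_mul (A n ν j * A n ν k)))]
  rw [Finset.sum_congr rfl (fun j _ => integral_finset_sum _
    (fun k _ => (Real.GammaIntegral_convergent (hs j k)).const_mul (A n ν j * A n ν k)))]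
  rw [Finset.sum_congr rfl (fun j _ => Finset.sum_congr rfl (fun k _ => by
    rw [MeasureTheory.integral_const_mul, ← Real.Gamma_eq_integral (hs j k)]))]
  exact key n ν hν
end
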